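/- Let p > m be positive integers of the same parity and z₀ > 0, z₀ ≠ 1. Then the ratio (z₀^{1−p} + z₀^{3−p} + ⋯ + z₀^{p−1}) / (z₀^{1−m} + z₀^{3−m} + ⋯ + z₀^{m−1}) is strictly greater than p/m. -/
import Mathlib

open Finset

noncomputable def Ssum (z : ℝ) (n : ℕ) : ℝ := ∑ i ∈ range n, z ^ ((1 - (n:ℤ)) + 2 * (i : ℤ))

lemma Ssum_pos {z : ℝ} (hz : 0 < z) {n : ℕ} (hn : 0 < n) : 0 < Ssum z n := by
  apply Finset.sum_pos (fun i _ => zpow_pos hz _)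
  exact nonempty_range_iff.mpr hn.ne'

lemma pair_lt {z : ℝ} (hz : 0 < z) (hz1 : z ≠ 1) {a b : ℤ} (ha : 0 ≤ a) (hab : a < b) :
    z ^ a + z ^ (-a) < z ^ b + z ^ (-b) := by
  have hprod : (z ^ b + z ^ (-b)) - (z ^ a + z ^ (-a))
      = (z ^ b - z ^ a) * (1 - z ^ (-(a+b))) := by
    have h1 : z ^ b * z ^ (-(a+b)) = z ^ (-a) := by
      rw [← zpow_add₀ hz.ne']; ring_nf
    have h2 : z ^ a * z ^ (-(a+b)) = z ^ (-b) := by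
      rw [← zpow_add₀ hz.ne']; ring_nf
    linear_combination h1 - h2
  have habs : 0 < (z ^ b - z ^ a) * (1 - z ^ (-(a+b))) := by
    rcases lt_or_gt_of_ne hz1 with h | h
    · have h1 : z ^ b < z ^ a := zpow_lt_zpow_right_of_lt_one₀ hz h hab
      have h2 : 1 < z ^ (-(a+b)) := one_lt_zpow_of_neg₀ hz h (by omega)
      nlinarith
    · have h1 : z ^ a < z ^ b := zpow_lt_zpow_right₀ h hab
      have h2 : z ^ (-(a+b)) < 1 := by
        have := zpow_lt_zpow_right₀ h (show -(a+b) < 0 by omega)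
        simpa using this
      nlinarith
  linarith [hprod, habs]

lemma pair_lt' {z : ℝ} (hz : 0 < z) (hz1 : z ≠ 1) {e b : ℤ} (hab : |e| < b) :
    z ^ e + z ^ (-e) < z ^ b + z ^ (-b) := by
  rcases le_total 0 e with h | h
  · exact pair_lt hz hz1 h (by rwa [abs_of_nonneg h] at hab)
  · have := pair_lt hz hz1 (neg_nonneg.mpr h) (by rwa [abs_of_nonpos h] at hab)
    rw [neg_neg] at this
    linarith

lemma Ssum_reflect {z : ℝ} (n : ℕ) :
    Ssum z n = ∑ i ∈ range n, z ^ ((n:ℤ) - 1 - 2 * (i:ℤ)) := by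
  rw [Ssum, ← Finset.sum_range_reflect]
  apply Finset.sum_congr rfl
  intro i hi
  simp only [mem_range] at hi
  congr 1
  have : ((n - 1 - i : ℕ) : ℤ) = (n:ℤ) - 1 - i := by omega
  rw [this]; ring

lemma Ssum_step {z : ℝ} (n : ℕ) :
    Ssum z (n+2) = Ssum z n + (z ^ ((n:ℤ)+1) + z ^ (-((n:ℤ)+1))) := by
  have hs : ∀ i : ℕ, z ^ (1 - ((n+2:ℕ):ℤ) + 2 * ((i+1:ℕ):ℤ)) = z ^ ((1 - (n:ℤ)) + 2 * (i:ℤ)) := by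
    intro i; congr 1 <;> push_cast <;> ring
  have h0 : z ^ (1 - ((n+2:ℕ):ℤ) + 2 * ((0:ℕ):ℤ)) = z ^ (-((n:ℤ)+1)) := by
    congr 1 <;> push_cast <;> ring
  have htop : z ^ (1 - ((n+2:ℕ):ℤ) + 2 * ((n+1:ℕ):ℤ)) = z ^ ((n:ℤ)+1) := by
    congr 1 <;> push_cast <;> ring
  rw [Ssum, Finset.sum_range_succ, Finset.sum_range_succ', htop, h0,
    Finset.sum_congr rfl (fun i _ => hs i), ← Ssum]
  ring

lemma two_Ssum_lt {z : ℝ} (hz : 0 < z) (hz1 : z ≠ 1) {n : ℕ} (hn : 0 < n) :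
    2 * Ssum z n < n * (z ^ ((n:ℤ)+1) + z ^ (-((n:ℤ)+1))) := by
  have h : 2 * Ssum z n = ∑ i ∈ range n,
      (z ^ ((1 - (n:ℤ)) + 2 * (i:ℤ)) + z ^ (-((1 - (n:ℤ)) + 2 * (i:ℤ)))) := by
    rw [two_mul]
    nth_rewrite 2 [Ssum_reflect]
    rw [Ssum, ← Finset.sum_add_distrib]
    apply Finset.sum_congr rfl
    intro i _
    congr 2
    ring
  rw [h]
  have := Finset.sum_lt_sum_of_nonempty (nonempty_range_iff.mpr hn.ne')
    (f := fun i : ℕ => z ^ ((1 - (n:ℤ)) + 2 * (i:ℤ)) + z ^ (-((1 - (n:ℤ)) + 2 * (i:ℤ))))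
    (g := fun _ : ℕ => z ^ ((n:ℤ)+1) + z ^ (-((n:ℤ)+1)))
    (by
      intro i hi
      simp only [mem_range] at hi
      apply pair_lt' hz hz1
      rw [abs_lt]
      constructor <;> omega)
  have hconst : ∑ _i ∈ range n, (z ^ ((n:ℤ)+1) + z ^ (-((n:ℤ)+1)))
      = n * (z ^ ((n:ℤ)+1) + z ^ (-((n:ℤ)+1))) := by
    rw [Finset.sum_const, card_range, nsmul_eq_mul]
  rw [← hconst]
  exact this

lemma step_ineq {z : ℝ} (hz : 0 < z) (hz1 : z ≠ 1) {n : ℕ} (hn : 0 < n) :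
    ((n:ℝ)+2) * Ssum z n < n * Ssum z (n+2) := by
  have h1 := two_Ssum_lt hz hz1 hn
  rw [Ssum_step]
  nlinarith

lemma chain {z : ℝ} (hz : 0 < z) (hz1 : z ≠ 1) {m : ℕ} (hm : 0 < m) (k : ℕ) :
    ((m:ℝ) + 2*(k+1)) * Ssum z m < m * Ssum z (m + 2*(k+1)) := by
  induction k with
  | zero => simpa using step_ineq hz hz1 hm
  | succ k ih =>
    have hstep := step_ineq hz hz1 (show 0 < m + 2*(k+1) by omega)
    have hpos1 : (0:ℝ) < Ssum z m := Ssum_pos hz hm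
    have hpos2 : (0:ℝ) < Ssum z (m + 2*(k+1)) := Ssum_pos hz (by omega)
    have h1 : (m + 2*(k+1) + 2 : ℕ) = m + 2*(k+1+1) := by omega
    rw [h1] at hstep
    push_cast at hstep ih ⊢
    have hmpos : (0:ℝ) < m := by exact_mod_cast hm
    have hm2 : (0:ℝ) < (m:ℝ) + 2*(k+1) := by positivity
    nlinarith [mul_pos hmpos hpos2]

theorem sum_ratio_gt (p m : ℕ) (hm : 0 < m) (hpm : m < p) (hpar : p % 2 = m % 2)
    (z₀ : ℝ) (hz : 0 < z₀) (hz1 : z₀ ≠ 1) :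
    (∑ i ∈ Finset.range p, z₀ ^ ((1 - (p : ℤ)) + 2 * (i : ℤ))) /
      (∑ i ∈ Finset.range m, z₀ ^ ((1 - (m : ℤ)) + 2 * (i : ℤ))) > (p : ℝ) / m := by
  obtain ⟨k, hk⟩ : ∃ k : ℕ, p = m + 2*(k+1) := ⟨(p - m)/2 - 1, by omega⟩
  have h := chain hz hz1 hm k
  rw [← hk] at h
  have hSm : (0:ℝ) < Ssum z₀ m := Ssum_pos hz hm
  have hSp : (0:ℝ) < Ssum z₀ p := Ssum_pos hz (by omega)
  have hmpos : (0:ℝ) < m := by exact_mod_cast hm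
  have hp : ((m:ℝ) + 2*(k+1)) = p := by push_cast [hk]; ring
  rw [hp] at h
  show (p:ℝ)/m < Ssum z₀ p / Ssum z₀ m
  rw [div_lt_div_iff₀ hmpos hSm]
  linarith
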